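/- arXiv:2504.13106 — 5 statements merged into one kernel-verified Lean document; each statement's English description precedes it below -/
import Mathlib

section
/- For every integer $n \ge 5$: if $n$ is even then $B_{n-1} > q^{2n-5} + q^{2n-6}$, and if $n$ is odd then $B_{n-1} < 3q^{2n-5} + q^{2n-6}$. -/
theorem stmt_1 (q : ℤ) (hq : 2 ≤ q) (B : ℕ → ℤ)
    (hB4 : B 4 = 3 * (q ^ 5 + 1))
    (hrec : ∀ n : ℕ, 5 ≤ n →
      (Even n → B n = q ^ 2 * B (n - 1) - q ^ (n - 2)) ∧
      (Odd n → B n = q ^ 2 * B (n - 1) + 3 * q ^ (n - 2) + q ^ (n - 3))) :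
    ∀ n : ℕ, 5 ≤ n →
      (Even n → B (n - 1) > q ^ (2 * n - 5) + q ^ (2 * n - 6)) ∧
      (Odd n → B (n - 1) < 3 * q ^ (2 * n - 5) + q ^ (2 * n - 6)) := by
  have hq0 : (0:ℤ) < q := by linarith
  have hq1 : (1:ℤ) ≤ q := by linarith
  have hB5 : B 5 = q ^ 2 * B 4 + 3 * q ^ 3 + q ^ 2 := by
    have := (hrec 5 (by norm_num)).2 (by decide)
    simpa using this
  have hB6 : B 6 = q ^ 2 * B 5 - q ^ 4 := by
    have := (hrec 6 (by norm_num)).1 (by decide)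
    simpa using this
  -- key invariant for m = k + 6
  have key : ∀ k : ℕ, 3 * q ^ (2*k+9) + 2 * q ^ (k+4) ≤ B (k+6) ∧
      B (k+6) ≤ 3 * q ^ (2*k+9) + 3 * q ^ (2*k+6) + q ^ (2*k+5) - 4 * q ^ (k+4) := by
    intro k
    induction k with
    | zero =>
      have hB6' : B 6 = 3*q^9 + 3*q^5 + 3*q^4 := by
        rw [hB6, hB5, hB4]; ring
      norm_num [hB6']
      constructor
      · nlinarith [pow_pos hq0 4, pow_pos hq0 5]
      · have e5 : q^5 = q^4*q := by ring
        have e6 : q^6 = q^4*q^2 := by ring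
        have h4 : (0:ℤ) < q^4 := pow_pos hq0 4
        nlinarith [h4, sq_nonneg (q-2), mul_pos h4 hq0]
    | succ k ih =>
      obtain ⟨hlo, hhi⟩ := ih
      have ha : (1:ℤ) ≤ q ^ k := one_le_pow₀ hq1
      have pw2 : ∀ c : ℕ, q ^ (2*k + c) = (q ^ k) ^ 2 * q ^ c := by
        intro c; rw [pow_add, pow_mul']
      have pw1 : ∀ c : ℕ, q ^ (k + c) = q ^ k * q ^ c := fun c => pow_add q k c
      have e1 : 2*(k+1)+9 = 2*k+11 := by ring
      have e2 : (k+1)+4 = k+5 := by ring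
      have e3 : (k+1)+6 = k+7 := by ring
      have e4 : 2*(k+1)+6 = 2*k+8 := by ring
      have e5 : 2*(k+1)+5 = 2*k+7 := by ring
      simp only [e1, e2, e3, e4, e5, pw2, pw1]
      simp only [pw2, pw1] at hlo hhi
      set a := q ^ k with haa
      rcases Nat.even_or_odd (k+7) with he | ho
      · have hB := (hrec (k+7) (by omega)).1 he
        have d1 : k+7-1 = k+6 := rfl
        have d2 : k+7-2 = k+5 := rfl
        rw [d1, d2, pw1] at hB
        rw [hB]
        constructor
        · linarith [mul_le_mul_of_nonneg_left hlo (by positivity : (0:ℤ) ≤ q^2),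
            mul_nonneg (mul_nonneg (by linarith : (0:ℤ) ≤ a) (by positivity : (0:ℤ) ≤ q^5)) (by linarith : (0:ℤ) ≤ 2*q-3),
            mul_nonneg (by linarith : (0:ℤ) ≤ a) (by positivity : (0:ℤ) ≤ q^5),
            mul_nonneg (by linarith : (0:ℤ) ≤ a) (by positivity : (0:ℤ) ≤ q^4),
            mul_nonneg (by positivity : (0:ℤ) ≤ a^2) (by positivity : (0:ℤ) ≤ q^5)]
        · linarith [mul_le_mul_of_nonneg_left hhi (by positivity : (0:ℤ) ≤ q^2),
            mul_nonneg (mul_nonneg (by linarith : (0:ℤ) ≤ a) (by positivity : (0:ℤ) ≤ q^5)) (by linarith : (0:ℤ) ≤ 4*q-4),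
            mul_nonneg (by linarith : (0:ℤ) ≤ a) (by positivity : (0:ℤ) ≤ q^5),
            mul_nonneg (by linarith : (0:ℤ) ≤ a) (by positivity : (0:ℤ) ≤ q^4),
            mul_nonneg (by positivity : (0:ℤ) ≤ a^2) (by positivity : (0:ℤ) ≤ q^5)]
      · have hB := (hrec (k+7) (by omega)).2 ho
        have d1 : k+7-1 = k+6 := rfl
        have d2 : k+7-2 = k+5 := rfl
        have d3 : k+7-3 = k+4 := rfl
        rw [d1, d2, d3, pw1, pw1] at hB
        rw [hB]
        constructor
        · linarith [mul_le_mul_of_nonneg_left hlo (by positivity : (0:ℤ) ≤ q^2),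
            mul_nonneg (mul_nonneg (by linarith : (0:ℤ) ≤ a) (by positivity : (0:ℤ) ≤ q^5)) (by linarith : (0:ℤ) ≤ 2*q-2),
            mul_nonneg (by linarith : (0:ℤ) ≤ a) (by positivity : (0:ℤ) ≤ q^5),
            mul_nonneg (by linarith : (0:ℤ) ≤ a) (by positivity : (0:ℤ) ≤ q^4),
            mul_nonneg (by positivity : (0:ℤ) ≤ a^2) (by positivity : (0:ℤ) ≤ q^5)]
        · linarith [mul_le_mul_of_nonneg_left hhi (by positivity : (0:ℤ) ≤ q^2),
            mul_nonneg (mul_nonneg (by linarith : (0:ℤ) ≤ a) (by positivity : (0:ℤ) ≤ q^4))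
              (by nlinarith [mul_nonneg (by linarith : (0:ℤ) ≤ q) (by linarith : (0:ℤ) ≤ q-2)] : (0:ℤ) ≤ 4*q^2-7*q-1),
            mul_nonneg (by linarith : (0:ℤ) ≤ a) (by positivity : (0:ℤ) ≤ q^5),
            mul_nonneg (by linarith : (0:ℤ) ≤ a) (by positivity : (0:ℤ) ≤ q^4),
            mul_nonneg (by positivity : (0:ℤ) ≤ a^2) (by positivity : (0:ℤ) ≤ q^5)]
  intro n hn
  rcases Nat.lt_or_ge n 7 with h | h
  · interval_cases n
    · refine ⟨fun he => absurd he (by decide), fun _ => ?_⟩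
      show B (5-1) < 3 * q ^ (2*5-5) + q ^ (2*5-6)
      norm_num
      rw [hB4]
      have h4 : (16:ℤ) ≤ q^4 := by
        calc (16:ℤ) = 2^4 := by norm_num
        _ ≤ q^4 := pow_le_pow_left₀ (by norm_num) hq 4
      linarith
    · refine ⟨fun _ => ?_, fun ho => absurd ho (by decide)⟩
      show B (6-1) > q ^ (2*6-5) + q ^ (2*6-6)
      norm_num
      rw [hB5, hB4]
      have : (0:ℤ) ≤ q^6 * (2*q-1) := mul_nonneg (by positivity) (by linarith)
      nlinarith [pow_pos hq0 3, pow_pos hq0 2]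
  · obtain ⟨k, rfl⟩ : ∃ k, n = k+7 := ⟨n-7, by omega⟩
    obtain ⟨hlo, hhi⟩ := key k
    have ha : (1:ℤ) ≤ q ^ k := one_le_pow₀ hq1
    have pw2 : ∀ c : ℕ, q ^ (2*k + c) = (q ^ k) ^ 2 * q ^ c := by
      intro c; rw [pow_add, pow_mul']
    have pw1 : ∀ c : ℕ, q ^ (k + c) = q ^ k * q ^ c := fun c => pow_add q k c
    have d1 : 2*(k+7)-5 = 2*k+9 := by omega
    have d2 : 2*(k+7)-6 = 2*k+8 := by omega
    have d3 : k+7-1 = k+6 := rfl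
    rw [d1, d2, d3]
    simp only [pw2, pw1] at hlo hhi ⊢
    set a := q ^ k with haa
    constructor
    · intro _
      have h1 : (0:ℤ) < a^2 * q^8 * (2*q-1) :=
        mul_pos (mul_pos (by positivity) (by positivity)) (by linarith)
      have h2 : (0:ℤ) ≤ a * q^4 := mul_nonneg (by linarith) (by positivity)
      linarith
    · intro _
      have hc : (0:ℤ) ≤ q^3 - 3*q - 1 := by nlinarith [sq_nonneg (q-1), sq_nonneg q]
      have h1 : (0:ℤ) ≤ a^2 * (q^5 * (q^3 - 3*q - 1)) :=
        mul_nonneg (by positivity) (mul_nonneg (by positivity) hc)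
      have h2 : (0:ℤ) < a * q^4 := mul_pos (by linarith) (by positivity)
      linarith
end

section
/- For every even integer $n \ge 4$ and every integer $q \ge 3$, the inequality $\frac{q^{2n-1}+q^n-q^{n-1}-1}{q^2-1} + A_n < B_n$ holds, where $A_n$ and $B_n$ are as defined. -/
lemma stmt3_aux (q u : ℚ) (hq' : 3 ≤ q) (hq0 : 0 < q) (hupos : 0 < u) (huq : q^3 ≤ u)
    (hq5 : q^4 ≤ q*u) (hq4 : 0 ≤ (q-3)*u) :
    u*u*q^5 + u*q^3 - u*q^2 - 1 ≤
      q^4*(u*u*q + u*q - u - 1) + (2*q^2*u - q*u)*(q^2-1) := by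
  nlinarith [hq5, hq4, hupos, hq',
    mul_nonneg hq4 (pow_pos hq0 4).le,
    mul_nonneg hq4 (pow_pos hq0 3).le,
    mul_nonneg hq4 (pow_pos hq0 2).le,
    mul_nonneg hupos.le (pow_pos hq0 4).le,
    mul_nonneg hupos.le (pow_pos hq0 3).le,
    mul_nonneg hupos.le (pow_pos hq0 2).le]

set_option maxHeartbeats 1000000 in
theorem stmt_3 (q : ℤ) (hq : 3 ≤ q) (A B : ℕ → ℚ)
    (hA4 : A 4 = (q : ℚ) ^ 5 + (q : ℚ) ^ 4 + 4 * (q : ℚ) ^ 3 - 3 * (q : ℚ) + 1)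
    (hB4 : B 4 = 3 * ((q : ℚ) ^ 5 + 1))
    (hrecA : ∀ m : ℕ, 5 ≤ m →
      (Even m → A m = (q : ℚ) ^ 2 * A (m - 1) - (q : ℚ) ^ (m - 2)) ∧
      (Odd m → A m = (q : ℚ) ^ 2 * A (m - 1) + (q : ℚ) ^ (m - 2) + 2 * (q : ℚ) ^ (m - 3)))
    (hrecB : ∀ m : ℕ, 5 ≤ m →
      (Even m → B m = (q : ℚ) ^ 2 * B (m - 1) - (q : ℚ) ^ (m - 2)) ∧
      (Odd m → B m = (q : ℚ) ^ 2 * B (m - 1) + 3 * (q : ℚ) ^ (m - 2) + (q : ℚ) ^ (m - 3)))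
    (n : ℕ) (hn : 4 ≤ n) (hne : Even n) :
    ((q : ℚ) ^ (2 * n - 1) + (q : ℚ) ^ n - (q : ℚ) ^ (n - 1) - 1) / ((q : ℚ) ^ 2 - 1)
      + A n < B n := by
  have hq' : (3:ℚ) ≤ (q:ℚ) := by exact_mod_cast hq
  have hq0 : (0:ℚ) < (q:ℚ) := by linarith
  have hd : (0:ℚ) < (q:ℚ)^2 - 1 := by nlinarith
  have key : ∀ k : ℕ, (q:ℚ)^(4*k+7) + (q:ℚ)^(2*k+4) - (q:ℚ)^(2*k+3) - 1
      < (B (2*k+4) - A (2*k+4)) * ((q:ℚ)^2 - 1) := by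
    intro k
    induction k with
    | zero =>
      norm_num
      rw [hA4, hB4]
      nlinarith [hq', pow_pos hq0 3, pow_pos hq0 2, mul_pos hq0 hq0,
        mul_nonneg (mul_nonneg (by linarith : (0:ℚ) ≤ (q:ℚ)-3) (by linarith : (0:ℚ) ≤ (q:ℚ)+2))
          (pow_pos hq0 3).le, sq_nonneg ((q:ℚ)-3), sq_nonneg ((q:ℚ)+1)]
    | succ k ih =>
      have hoA := (hrecA (2*k+5) (by omega)).2 ⟨k+2, by ring⟩
      have heA := (hrecA (2*k+6) (by omega)).1 ⟨k+3, by ring⟩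
      have hoB := (hrecB (2*k+5) (by omega)).2 ⟨k+2, by ring⟩
      have heB := (hrecB (2*k+6) (by omega)).1 ⟨k+3, by ring⟩
      have e1 : 2*k+5-1 = 2*k+4 := by omega
      have e2 : 2*k+5-2 = 2*k+3 := by omega
      have e3 : 2*k+5-3 = 2*k+2 := by omega
      have e4 : 2*k+6-1 = 2*k+5 := by omega
      have e5 : 2*k+6-2 = 2*k+4 := by omega
      rw [e1, e2, e3] at hoA hoB
      rw [e4, e5] at heA heB
      have g1 : 4*(k+1)+7 = 4*k+11 := by omega
      have g2 : 2*(k+1)+4 = 2*k+6 := by omega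
      have g3 : 2*(k+1)+3 = 2*k+5 := by omega
      obtain ⟨u, hu⟩ : ∃ u : ℚ, u = (q:ℚ)^(2*k+3) := ⟨_, rfl⟩
      rw [← hu] at hoA hoB ih
      have hupos : 0 < u := hu ▸ pow_pos hq0 _
      have huq : (q:ℚ)^3 ≤ u := by
        rw [hu]; exact pow_le_pow_right₀ (by linarith) (by omega)
      have p4 : (q:ℚ)^(2*k+4) = u * (q:ℚ) := by rw [hu, ← pow_succ]
      have p5 : (q:ℚ)^(2*k+5) = u * (q:ℚ)^2 := by rw [hu, ← pow_add]
      have p6 : (q:ℚ)^(2*k+6) = u * (q:ℚ)^3 := by rw [hu, ← pow_add]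
      have p2' : (q:ℚ)^2 * (q:ℚ)^(2*k+2) = (q:ℚ) * u := by
        rw [hu, ← pow_add, ← pow_succ']
        congr 1
        omega
      have exp7 : 4*k+7 = (2*k+3)+(2*k+3)+1 := by omega
      have p7 : (q:ℚ)^(4*k+7) = u * u * (q:ℚ) := by
        rw [exp7, pow_succ, pow_add, hu]
      have exp11 : 4*k+11 = (2*k+3)+(2*k+3)+5 := by omega
      have p11 : (q:ℚ)^(4*k+11) = u * u * (q:ℚ)^5 := by
        rw [exp11, pow_add, pow_add, hu]
      have heA' : A (2*k+6) = (q:ℚ)^4 * A (2*k+4) + (q:ℚ)^2 * u + (q:ℚ) * u := by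
        rw [heA, hoA, p4]; linear_combination 2 * p2'
      have heB' : B (2*k+6) = (q:ℚ)^4 * B (2*k+4) + 3 * (q:ℚ)^2 * u := by
        rw [heB, hoB, p4]; linear_combination p2'
      rw [p7, p4] at ih
      have hm := mul_lt_mul_of_pos_left ih (pow_pos hq0 4)
      rw [g1, g2, g3, heA', heB', p11, p6, p5]
      have hq5 : (q:ℚ)^4 ≤ (q:ℚ) * u := by nlinarith [mul_nonneg hq0.le (sub_nonneg.mpr huq)]
      have hq4 : (0:ℚ) ≤ ((q:ℚ)-3) * u := mul_nonneg (by linarith) hupos.le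
      have step := stmt3_aux (q:ℚ) u hq' hq0 hupos huq hq5 hq4
      have req : ((q:ℚ)^4 * B (2*k+4) + 3*(q:ℚ)^2*u - ((q:ℚ)^4 * A (2*k+4) + (q:ℚ)^2*u + (q:ℚ)*u))
            * ((q:ℚ)^2-1)
          = (q:ℚ)^4*((B (2*k+4) - A (2*k+4))*((q:ℚ)^2-1)) + (2*(q:ℚ)^2*u - (q:ℚ)*u)*((q:ℚ)^2-1) := by
        ring
      rw [req]
      linarith [hm, step]
  obtain ⟨j, hj⟩ := hne
  obtain ⟨k, hk⟩ : ∃ k, n = 2*k+4 := ⟨j - 2, by omega⟩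
  have h := key k
  have e1 : 2*n - 1 = 4*k+7 := by omega
  have e2 : n - 1 = 2*k+3 := by omega
  rw [hk] at e1 e2 ⊢
  rw [e1, e2, div_add' _ _ _ hd.ne', div_lt_iff₀ hd]
  nlinarith [h]
end

section
/- For every odd integer $n \ge 5$ and every integer $q \ge 3$, the inequality $\frac{q^{2n-1}+q^{n+1}-q^n-1}{q^2-1} + A_n < B_n$ holds, where $A_n$ and $B_n$ are as defined. -/
theorem stmt_4 (q : ℤ) (hq : 3 ≤ q) (A B : ℕ → ℚ)
    (hA4 : A 4 = (q : ℚ) ^ 5 + (q : ℚ) ^ 4 + 4 * (q : ℚ) ^ 3 - 3 * (q : ℚ) + 1)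
    (hB4 : B 4 = 3 * ((q : ℚ) ^ 5 + 1))
    (hrecA : ∀ m : ℕ, 5 ≤ m →
      (Even m → A m = (q : ℚ) ^ 2 * A (m - 1) - (q : ℚ) ^ (m - 2)) ∧
      (Odd m → A m = (q : ℚ) ^ 2 * A (m - 1) + (q : ℚ) ^ (m - 2) + 2 * (q : ℚ) ^ (m - 3)))
    (hrecB : ∀ m : ℕ, 5 ≤ m →
      (Even m → B m = (q : ℚ) ^ 2 * B (m - 1) - (q : ℚ) ^ (m - 2)) ∧
      (Odd m → B m = (q : ℚ) ^ 2 * B (m - 1) + 3 * (q : ℚ) ^ (m - 2) + (q : ℚ) ^ (m - 3)))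
    (n : ℕ) (hn : 5 ≤ n) (hno : Odd n) :
    ((q : ℚ) ^ (2 * n - 1) + (q : ℚ) ^ (n + 1) - (q : ℚ) ^ n - 1) / ((q : ℚ) ^ 2 - 1)
      + A n < B n := by
  have hq3 : (3 : ℚ) ≤ (q : ℚ) := by exact_mod_cast hq
  have hq0 : (0 : ℚ) < (q : ℚ) := by linarith
  have hd : (0 : ℚ) < (q : ℚ) ^ 2 - 1 := by nlinarith
  -- key induction: with X = q^(2k+4),
  -- q*X^2 + q^2*X - q*X - 1 < (B (2k+5) - A (2k+5)) * (q^2 - 1)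
  have key : ∀ k : ℕ,
      (q : ℚ) * ((q : ℚ) ^ (2 * k + 4)) ^ 2 + (q : ℚ) ^ 2 * (q : ℚ) ^ (2 * k + 4)
        - (q : ℚ) * (q : ℚ) ^ (2 * k + 4) - 1
        < (B (2 * k + 5) - A (2 * k + 5)) * ((q : ℚ) ^ 2 - 1) := by
    intro k
    induction k with
    | zero =>
      have hA5 := (hrecA 5 (by norm_num)).2 (by decide)
      have hB5 := (hrecB 5 (by norm_num)).2 (by decide)
      norm_num at hA5 hB5 ⊢
      rw [hA5, hB5, hA4, hB4]
      nlinarith [pow_pos hq0 3, pow_pos hq0 5, pow_pos hq0 7, sq_nonneg ((q:ℚ)^2),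
        mul_pos hq0 hq0]
    | succ k ih =>
      set X : ℚ := (q : ℚ) ^ (2 * k + 4) with hXdef
      have hX0 : (0 : ℚ) < X := pow_pos hq0 _
      have hX4 : (q : ℚ) ^ 4 ≤ X := by
        calc (q : ℚ) ^ 4 ≤ (q : ℚ) ^ (2 * k + 4) :=
              pow_le_pow_right₀ (by linarith) (by omega)
          _ = X := rfl
      have e1 : 2 * (k + 1) + 4 = 2 * k + 6 := by ring
      have e2 : 2 * (k + 1) + 5 = 2 * k + 7 := by ring
      rw [e1, e2]
      have hA6 := (hrecA (2 * k + 6) (by omega)).1 ⟨k + 3, by ring⟩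
      have hB6 := (hrecB (2 * k + 6) (by omega)).1 ⟨k + 3, by ring⟩
      have hA7 := (hrecA (2 * k + 7) (by omega)).2 ⟨k + 3, by ring⟩
      have hB7 := (hrecB (2 * k + 7) (by omega)).2 ⟨k + 3, by ring⟩
      have s1 : 2 * k + 6 - 1 = 2 * k + 5 := by omega
      have s2 : 2 * k + 6 - 2 = 2 * k + 4 := by omega
      have s3 : 2 * k + 7 - 1 = 2 * k + 6 := by omega
      have s4 : 2 * k + 7 - 2 = 2 * k + 5 := by omega
      have s5 : 2 * k + 7 - 3 = 2 * k + 4 := by omega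
      rw [s1, s2] at hA6 hB6
      rw [s3, s4, s5] at hA7 hB7
      rw [hA6] at hA7; rw [hB6] at hB7
      have p5 : (q : ℚ) ^ (2 * k + 5) = X * q := by rw [hXdef, ← pow_succ]
      have p6 : (q : ℚ) ^ (2 * k + 6) = X * q ^ 2 := by
        rw [hXdef, ← pow_add]
      rw [p5] at hA7 hB7
      rw [← hXdef] at hA7 hB7
      rw [p6, hA7, hB7]
      have hpoly : (1 : ℚ) ≤ (q : ℚ) ^ 6 - (q:ℚ)^5 - (q:ℚ)^4 + 3*(q:ℚ)^3 - (q:ℚ)^2 - 2*(q:ℚ) + 1 := by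
        nlinarith [pow_pos hq0 3, pow_pos hq0 4, sq_nonneg ((q:ℚ)^2 - q), pow_pos hq0 5]
      have h1 : (q : ℚ) ^ 4 * 1 ≤ X * ((q : ℚ) ^ 6 - (q:ℚ)^5 - (q:ℚ)^4 + 3*(q:ℚ)^3 - (q:ℚ)^2 - 2*(q:ℚ) + 1) :=
        mul_le_mul hX4 hpoly (by norm_num) (le_of_lt hX0)
      nlinarith [mul_lt_mul_of_pos_left ih (pow_pos hq0 4), h1]
  obtain ⟨k, hk⟩ : ∃ k, n = 2 * k + 5 := by
    obtain ⟨j, hj⟩ := hno; exact ⟨j - 2, by omega⟩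
  subst hk
  rw [← lt_sub_iff_add_lt, div_lt_iff₀ hd]
  have g1 : (q : ℚ) ^ (2 * (2 * k + 5) - 1) = (q : ℚ) * ((q : ℚ) ^ (2 * k + 4)) ^ 2 := by
    rw [show 2 * (2 * k + 5) - 1 = (2 * k + 4) * 2 + 1 from by omega, pow_succ, pow_mul]
    ring
  have g2 : (q : ℚ) ^ (2 * k + 5 + 1) = (q : ℚ) ^ 2 * (q : ℚ) ^ (2 * k + 4) := by
    rw [show 2 * k + 5 + 1 = 2 * k + 4 + 2 from by omega, pow_add]; ring
  have g3 : (q : ℚ) ^ (2 * k + 5) = (q : ℚ) * (q : ℚ) ^ (2 * k + 4) := by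
    rw [pow_succ]; ring
  rw [g1, g2, g3]
  linarith [key k]
end

section
/- Let $q \ge 2$ and $n \ge 2$. The number of $\mathbb{F}_{q^2}$-rational points of a non-degenerate Hermitian variety $\mathcal{U}_n$ in $\mathbb{P}^n(\mathbb{F}_{q^2})$, i.e., the number of points $[x_0 : \dots : x_n] \in \mathbb{P}^n(\mathbb{F}_{q^2})$ with $x_0^{q+1} + x_1^{q+1} + \dots + x_n^{q+1} = 0$, equals $\frac{(q^n - (-1)^n)(q^{n+1} - (-1)^{n+1})}{q^2 - 1}$. -/
open Finset

noncomputable def hcnt (q : ℕ) (F : Type) [Field F] [Fintype F] (m : ℕ) (c : F) : ℕ :=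
  Nat.card {v : Fin m → F // ∑ i, v i ^ (q + 1) = c}

section aux

variable {q : ℕ} {F : Type} [Field F] [Fintype F]

lemma qq_pos (hq : 2 ≤ q) : 0 < q ^ 2 - 1 := by
  have : 4 ≤ q ^ 2 := by nlinarith
  omega

lemma qq_fac (hq : 2 ≤ q) : q ^ 2 - 1 = (q + 1) * (q - 1) := by
  have := Nat.sq_sub_sq q 1
  simpa using this

lemma aux_card_roots [DecidableEq F] (hq : 2 ≤ q) (hF : Fintype.card F = q ^ 2) {d : ℕ} (hd : 0 < d)
    (hdvd : d ∣ q ^ 2 - 1) :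
    (univ.filter fun x : F => x ^ d = 1).card = d := by
  classical
  obtain ⟨g, hg⟩ := IsCyclic.exists_generator (α := Fˣ)
  have horder : orderOf g = q ^ 2 - 1 := by
    rw [orderOf_eq_card_of_forall_mem_zpowers hg, Nat.card_eq_fintype_card,
      Fintype.card_units, hF]
  have hN0 : q ^ 2 - 1 ≠ 0 := (qq_pos hq).ne'
  have hquot_dvd : (q ^ 2 - 1) / d ∣ q ^ 2 - 1 := Nat.div_dvd_of_dvd hdvd
  have hquot_pos : 0 < (q ^ 2 - 1) / d := Nat.div_pos (Nat.le_of_dvd (qq_pos hq) hdvd) hd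
  have hζ : orderOf (g ^ ((q ^ 2 - 1) / d)) = d := by
    rw [orderOf_pow' _ hquot_pos.ne', horder, Nat.gcd_eq_right hquot_dvd,
      Nat.div_div_self hdvd hN0]
  have hprimF : IsPrimitiveRoot ((g ^ ((q ^ 2 - 1) / d) : Fˣ) : F) d := by
    have h := IsPrimitiveRoot.orderOf ((g ^ ((q ^ 2 - 1) / d) : Fˣ) : F)
    rwa [orderOf_units, hζ] at h
  have hset : (univ.filter fun x : F => x ^ d = 1) = Polynomial.nthRootsFinset d (1 : F) := by
    ext x
    simp [Polynomial.mem_nthRootsFinset hd (1 : F)]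
  rw [hset, hprimF.card_nthRootsFinset]

lemma aux_norm_surj (hq : 2 ≤ q) (hF : Fintype.card F = q ^ 2) {c : F} (hc : c ^ q = c)
    (hc0 : c ≠ 0) : ∃ x : F, x ^ (q + 1) = c := by
  classical
  obtain ⟨g, hg⟩ := IsCyclic.exists_generator (α := Fˣ)
  have horder : orderOf g = q ^ 2 - 1 := by
    rw [orderOf_eq_card_of_forall_mem_zpowers hg, Nat.card_eq_fintype_card,
      Fintype.card_units, hF]
  set u : Fˣ := Units.mk0 c hc0 with hu_def
  obtain ⟨t, ht⟩ := (Submonoid.mem_powers_iff u g).1 (mem_powers_iff_mem_zpowers.2 (hg u))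
  have hcq : c ^ (q - 1) = 1 := by
    have h1 : c ^ (q - 1) * c = 1 * c := by
      rw [one_mul, ← pow_succ, Nat.sub_add_cancel (by omega : 1 ≤ q), hc]
    exact mul_right_cancel₀ hc0 h1
  have hu : u ^ (q - 1) = 1 := by
    ext
    rw [Units.val_pow_eq_pow_val]
    simpa [hu_def] using hcq
  have hdvd : orderOf g ∣ t * (q - 1) := orderOf_dvd_of_pow_eq_one (by rw [pow_mul, ht, hu])
  rw [horder, qq_fac hq] at hdvd
  have ht' : (q + 1) ∣ t := by
    have hq1 : 0 < q - 1 := by omega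
    exact (Nat.mul_dvd_mul_iff_right hq1).1 hdvd
  refine ⟨((g ^ (t / (q + 1)) : Fˣ) : F), ?_⟩
  have h2 : ((g ^ (t / (q + 1)) : Fˣ) : F) ^ (q + 1) = ((g ^ t : Fˣ) : F) := by
    rw [← Units.val_pow_eq_pow_val, ← pow_mul, Nat.div_mul_cancel ht']
  rw [h2, ht]
  simp [hu_def]

lemma aux_norm_in_K (hF : Fintype.card F = q ^ 2) (x : F) :
    (x ^ (q + 1)) ^ q = x ^ (q + 1) := by
  rw [← pow_mul, show (q + 1) * q = q ^ 2 + q by ring, pow_add, ← hF, FiniteField.pow_card,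
    ← pow_succ']

lemma aux_neg_one (hF : Fintype.card F = q ^ 2) : (-1 : F) ^ q = -1 := by
  rcases Nat.even_or_odd q with he | ho
  · have h2 : (-1 : F) = 1 := by
      calc (-1 : F) = (-1 : F) ^ Fintype.card F := (FiniteField.pow_card _).symm
        _ = ((-1 : F) ^ q) ^ q := by rw [hF, sq, pow_mul]
        _ = 1 := by rw [he.neg_one_pow, one_pow]
    rw [h2, one_pow]
  · exact ho.neg_one_pow

lemma aux_pow_q_add (hpp : ∃ p k : ℕ, p.Prime ∧ 0 < k ∧ q = p ^ k)
    (hF : Fintype.card F = q ^ 2) {ι : Type} (s : Finset ι) (f : ι → F) :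
    (∑ i ∈ s, f i) ^ q = ∑ i ∈ s, f i ^ q := by
  obtain ⟨p, k, hp, hk, rfl⟩ := hpp
  haveI : Fact p.Prime := ⟨hp⟩
  have hp0 : (p : F) = 0 := by
    have h0 : ((Fintype.card F : F)) = 0 := FiniteField.cast_card_eq_zero F
    rw [hF] at h0
    push_cast at h0
    have h1 : (p : F) ^ (k * 2) = 0 := by rw [pow_mul]; exact h0
    exact pow_eq_zero_iff (by omega : k * 2 ≠ 0) |>.1 h1
  haveI : CharP F p := (CharP.charP_iff_prime_eq_zero hp).2 hp0
  exact sum_pow_char_pow p k s f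

lemma hcnt_smul (m : ℕ) (c u : F) (hu : u ≠ 0) :
    hcnt q F m (u ^ (q + 1) * c) = hcnt q F m c := by
  unfold hcnt
  refine (Nat.card_congr (Equiv.subtypeEquiv
    (Equiv.piCongrRight fun _ : Fin m => Equiv.mulLeft₀ u hu) fun v => ?_)).symm
  show (∑ i, v i ^ (q + 1) = c) ↔ (∑ i, (u * v i) ^ (q + 1) = u ^ (q + 1) * c)
  have hsum : (∑ i, (u * v i) ^ (q + 1)) = u ^ (q + 1) * ∑ i, v i ^ (q + 1) := by
    rw [Finset.mul_sum]
    exact Finset.sum_congr rfl fun i _ => mul_pow u (v i) (q + 1)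
  rw [hsum]
  exact (mul_right_inj' (pow_ne_zero _ hu)).symm

lemma hcnt_one (hq : 2 ≤ q) (hF : Fintype.card F = q ^ 2) (m : ℕ) {c : F}
    (hcK : c ^ q = c) (hc0 : c ≠ 0) : hcnt q F m c = hcnt q F m 1 := by
  obtain ⟨x, hx⟩ := aux_norm_surj hq hF hcK hc0
  have hx0 : x ≠ 0 := by
    rintro rfl
    rw [zero_pow (by omega : q + 1 ≠ 0)] at hx
    exact hc0 hx.symm
  have h := hcnt_smul (q := q) (F := F) m 1 x hx0
  rw [mul_one, hx] at h
  exact h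

lemma hcnt_not_K (hpp : ∃ p k : ℕ, p.Prime ∧ 0 < k ∧ q = p ^ k)
    (hF : Fintype.card F = q ^ 2) (m : ℕ) {c : F} (hc : ¬ c ^ q = c) :
    hcnt q F m c = 0 := by
  have : IsEmpty {v : Fin m → F // ∑ i, v i ^ (q + 1) = c} := by
    refine ⟨fun v => hc ?_⟩
    rw [← v.2, aux_pow_q_add hpp hF]
    exact Finset.sum_congr rfl fun i _ => aux_norm_in_K hF (v.1 i)
  rw [hcnt]
  exact Nat.card_of_isEmpty

lemma hcnt_eq_filter [DecidableEq F] (m : ℕ) (c : F) :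
    hcnt q F m c = (univ.filter fun v : Fin m → F => ∑ i, v i ^ (q + 1) = c).card := by
  rw [hcnt, Nat.card_eq_fintype_card, Fintype.card_subtype]

lemma hcnt_total (hpp : ∃ p k : ℕ, p.Prime ∧ 0 < k ∧ q = p ^ k) (hq : 2 ≤ q)
    (hF : Fintype.card F = q ^ 2) (m : ℕ) :
    hcnt q F m 0 + (q - 1) * hcnt q F m 1 = q ^ (2 * m) := by
  classical
  have key : ∑ c : F, hcnt q F m c = q ^ (2 * m) := by
    have h1 : ∀ v ∈ (univ : Finset (Fin m → F)), (∑ i, v i ^ (q + 1)) ∈ (univ : Finset F) :=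
      fun _ _ => mem_univ _
    have h2 := Finset.card_eq_sum_card_fiberwise h1
    rw [Finset.card_univ] at h2
    have h3 : Fintype.card (Fin m → F) = q ^ (2 * m) := by
      rw [Fintype.card_fun, hF, Fintype.card_fin, ← pow_mul, mul_comm]
    rw [← h3, h2]
    refine Finset.sum_congr rfl fun c _ => ?_
    rw [hcnt_eq_filter (q := q) m c]
  rw [← key, ← Finset.sum_filter_add_sum_filter_not univ (fun c : F => c ^ (q - 1) = 1)
    (hcnt q F m)]
  have hA : ∑ c ∈ univ.filter (fun c : F => c ^ (q - 1) = 1), hcnt q F m c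
      = (q - 1) * hcnt q F m 1 := by
    rw [Finset.sum_congr rfl (fun c hc => ?_), Finset.sum_const, smul_eq_mul,
      aux_card_roots hq hF (by omega : 0 < q - 1) ⟨q + 1, by rw [qq_fac hq]; ring⟩]
    simp only [mem_filter] at hc
    have hc0 : c ≠ 0 := by
      rintro rfl
      rw [zero_pow (by omega : q - 1 ≠ 0)] at hc
      exact one_ne_zero hc.2.symm
    have hcK : c ^ q = c := by
      calc c ^ q = c ^ (q - 1 + 1) := by congr 1; omega
        _ = c ^ (q - 1) * c := pow_succ _ _
        _ = c := by rw [hc.2, one_mul]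
    exact hcnt_one hq hF m hcK hc0
  have hB : ∑ c ∈ univ.filter (fun c : F => ¬ c ^ (q - 1) = 1), hcnt q F m c
      = hcnt q F m 0 := by
    rw [Finset.sum_congr rfl
      (fun c hc => show hcnt q F m c = if c = 0 then hcnt q F m 0 else 0 from ?_)]
    · rw [Finset.sum_ite_eq' _ (0 : F) fun _ => hcnt q F m 0, if_pos]
      simp [zero_pow (by omega : q - 1 ≠ 0)]
    · simp only [mem_filter] at hc
      by_cases h0 : c = 0
      · rw [if_pos h0, h0]
      · rw [if_neg h0]
        refine hcnt_not_K hpp hF m fun hK => hc.2 ?_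
        have h1 : c ^ (q - 1) * c = 1 * c := by
          rw [one_mul, ← pow_succ, Nat.sub_add_cancel (by omega : 1 ≤ q), hK]
        exact mul_right_cancel₀ h0 h1
  rw [hA, hB]
  ring

lemma hcnt_rec (hq : 2 ≤ q) (hF : Fintype.card F = q ^ 2) (m : ℕ) :
    hcnt q F (m + 1) 0 = hcnt q F m 0 + (q ^ 2 - 1) * hcnt q F m 1 := by
  classical
  have step : hcnt q F (m + 1) 0 = ∑ x : F, hcnt q F m (-(x ^ (q + 1))) := by
    rw [hcnt]
    have e : {v : Fin (m + 1) → F // ∑ i, v i ^ (q + 1) = 0}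
        ≃ Σ x : F, {w : Fin m → F // ∑ i, w i ^ (q + 1) = -(x ^ (q + 1))} := by
      refine (Equiv.subtypeEquiv (Fin.consEquiv fun _ : Fin (m + 1) => F).symm fun v => ?_).trans
        (Equiv.subtypeProdEquivSigmaSubtype fun (x : F) (w : Fin m → F) =>
          ∑ i, w i ^ (q + 1) = -(x ^ (q + 1)))
      show (∑ i, v i ^ (q + 1) = 0) ↔ (∑ i, v (Fin.succ i) ^ (q + 1) = -(v 0 ^ (q + 1)))
      rw [Fin.sum_univ_succ]
      exact ⟨fun h => by linear_combination h, fun h => by linear_combination h⟩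
    rw [Nat.card_congr e, Nat.card_eq_fintype_card, Fintype.card_sigma]
    exact Finset.sum_congr rfl fun x _ => (Nat.card_eq_fintype_card).symm
  rw [step, ← Finset.add_sum_erase univ _ (mem_univ (0 : F)),
    show -((0 : F) ^ (q + 1)) = 0 by rw [zero_pow (by omega : q + 1 ≠ 0), neg_zero]]
  have hterm : ∀ x ∈ univ.erase (0 : F), hcnt q F m (-(x ^ (q + 1))) = hcnt q F m 1 := by
    intro x hx
    have hx0 : x ≠ 0 := (Finset.mem_erase.1 hx).1
    refine hcnt_one hq hF m ?_ (neg_ne_zero.2 (pow_ne_zero _ hx0))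
    rw [show (-(x ^ (q + 1))) = (-1) * x ^ (q + 1) by ring, mul_pow, aux_neg_one hF,
      aux_norm_in_K hF, neg_one_mul]
  rw [Finset.sum_congr rfl hterm, Finset.sum_const, smul_eq_mul,
    Finset.card_erase_of_mem (mem_univ _), Finset.card_univ, hF]

lemma hcnt_base : hcnt q F 0 0 = 1 := by
  rw [hcnt]
  have h : ∀ v : Fin 0 → F, ∑ i, v i ^ (q + 1) = (0 : F) := fun v => by simp
  rw [Nat.card_congr (Equiv.subtypeUnivEquiv h)]
  exact Nat.card_unique

lemma hcnt_closed (hpp : ∃ p k : ℕ, p.Prime ∧ 0 < k ∧ q = p ^ k) (hq : 2 ≤ q)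
    (hF : Fintype.card F = q ^ 2) (m : ℕ) :
    (hcnt q F m 0 : ℤ) * q = (q : ℤ) ^ (2 * m) + (-1) ^ m * ((q : ℤ) - 1) * (q : ℤ) ^ m := by
  induction m with
  | zero => rw [hcnt_base]; push_cast; ring
  | succ m ih =>
    have h1 := hcnt_rec (q := q) (F := F) hq hF m
    have h2 := hcnt_total (q := q) (F := F) hpp hq hF m
    have hq2 : 1 ≤ q ^ 2 := by nlinarith
    have hq1 : 1 ≤ q := by omega
    zify [hq2] at h1
    zify [hq1] at h2
    rw [h1]
    linear_combination (-(q : ℤ)) * ih + ((q : ℤ) + 1) * (q : ℤ) * h2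

end aux

theorem stmt_5 (q n : ℕ) (hq : 2 ≤ q) (hn : 2 ≤ n)
    (hpp : ∃ p k : ℕ, p.Prime ∧ 0 < k ∧ q = p ^ k)
    (F : Type) [Field F] [Fintype F] (hF : Fintype.card F = q ^ 2) :
    (({x : Projectivization F (Fin (n + 1) → F) |
        ∑ i, (x.rep i) ^ (q + 1) = 0}.ncard : ℤ)) =
      ((q : ℤ) ^ n - (-1) ^ n) * ((q : ℤ) ^ (n + 1) - (-1) ^ (n + 1)) / ((q : ℤ) ^ 2 - 1) := by
  classical
  set S : Set (Projectivization F (Fin (n + 1) → F)) :=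
    {x : Projectivization F (Fin (n + 1) → F) | ∑ i, (x.rep i) ^ (q + 1) = 0} with hS
  -- scaling invariance of the defining equation
  have hscale : ∀ (u : Fˣ) (v : Fin (n + 1) → F),
      (∑ i, (u • v) i ^ (q + 1)) = (u : F) ^ (q + 1) * ∑ i, v i ^ (q + 1) := by
    intro u v
    rw [Finset.mul_sum]
    exact Finset.sum_congr rfl fun i _ => by
      simp [Units.smul_def, mul_pow]
  have hscale0 : ∀ (u : Fˣ) (v : Fin (n + 1) → F),
      (∑ i, (u • v) i ^ (q + 1)) = 0 ↔ (∑ i, v i ^ (q + 1)) = 0 := by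
    intro u v
    rw [hscale u v]
    constructor
    · intro h
      rcases mul_eq_zero.1 h with h | h
      · exact absurd h (pow_ne_zero _ u.ne_zero)
      · exact h
    · intro h
      rw [h, mul_zero]
  -- the bijection between S × Fˣ and nonzero affine solutions
  have hnz : ∀ p : S × Fˣ, p.2 • (p.1 : Projectivization F (Fin (n + 1) → F)).rep ≠ 0 := by
    intro p h
    apply (p.1 : Projectivization F (Fin (n + 1) → F)).rep_nonzero
    have h2 := congrArg (fun z => p.2⁻¹ • z) h
    simpa [smul_smul] using h2
  have hcond : ∀ p : S × Fˣ,
      (∑ i, (p.2 • (p.1 : Projectivization F (Fin (n + 1) → F)).rep) i ^ (q + 1)) = 0 := by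
    intro p
    rw [hscale0]
    exact p.1.2
  have hcard1 : Nat.card S * (q ^ 2 - 1)
      = Nat.card {v : Fin (n + 1) → F // v ≠ 0 ∧ ∑ i, v i ^ (q + 1) = 0} := by
    have key : Function.Bijective (fun p : S × Fˣ =>
        (⟨p.2 • (p.1 : Projectivization F (Fin (n + 1) → F)).rep, hnz p, hcond p⟩ :
          {v : Fin (n + 1) → F // v ≠ 0 ∧ ∑ i, v i ^ (q + 1) = 0})) := by
      constructor
      · rintro ⟨x, u⟩ ⟨y, w⟩ hxy
        rw [Subtype.mk.injEq] at hxy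
        have hmx : Projectivization.mk F (u • (x : Projectivization F (Fin (n + 1) → F)).rep)
            (hnz (x, u)) = (x : Projectivization F (Fin (n + 1) → F)) := by
          conv_rhs => rw [← (x : Projectivization F (Fin (n + 1) → F)).mk_rep]
          exact (Projectivization.mk_eq_mk_iff F _ _ _ _).2 ⟨u, rfl⟩
        have hmy : Projectivization.mk F (w • (y : Projectivization F (Fin (n + 1) → F)).rep)
            (hnz (y, w)) = (y : Projectivization F (Fin (n + 1) → F)) := by
          conv_rhs => rw [← (y : Projectivization F (Fin (n + 1) → F)).mk_rep]
          exact (Projectivization.mk_eq_mk_iff F _ _ _ _).2 ⟨w, rfl⟩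
        have hxyp : (x : Projectivization F (Fin (n + 1) → F))
            = (y : Projectivization F (Fin (n + 1) → F)) := by
          rw [← hmx, ← hmy]
          congr 1
        have hxy' : x = y := Subtype.ext hxyp
        subst hxy'
        have hrep : u • (x : Projectivization F (Fin (n + 1) → F)).rep
            = w • (x : Projectivization F (Fin (n + 1) → F)).rep := by
          rw [hxy]
        obtain ⟨i, hi⟩ :=
          Function.ne_iff.1 (x : Projectivization F (Fin (n + 1) → F)).rep_nonzero
        have heq : (u : F) * (x : Projectivization F (Fin (n + 1) → F)).rep i
            = (w : F) * (x : Projectivization F (Fin (n + 1) → F)).rep i := by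
          have h3 := congrFun hrep i
          simpa [Units.smul_def] using h3
        have huw : u = w := Units.ext (mul_right_cancel₀ (by simpa using hi) heq)
        rw [huw]
      · rintro ⟨v, hv0, hv⟩
        obtain ⟨a, ha⟩ := Projectivization.exists_smul_eq_mk_rep F v hv0
        have hxS : Projectivization.mk F v hv0 ∈ S := by
          show (∑ i, ((Projectivization.mk F v hv0).rep i) ^ (q + 1)) = 0
          rw [← ha, hscale0]
          exact hv
        refine ⟨⟨⟨Projectivization.mk F v hv0, hxS⟩, a⁻¹⟩, ?_⟩
        apply Subtype.ext
        show a⁻¹ • (Projectivization.mk F v hv0).rep = v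
        rw [← ha, inv_smul_smul]
    have hcg := Nat.card_congr (Equiv.ofBijective _ key)
    rw [Nat.card_prod, Nat.card_eq_fintype_card (α := Fˣ), Fintype.card_units, hF] at hcg
    exact hcg
  -- the affine nonzero count
  have hcard2 : Nat.card {v : Fin (n + 1) → F // v ≠ 0 ∧ ∑ i, v i ^ (q + 1) = 0}
      = hcnt q F (n + 1) 0 - 1 := by
    rw [Nat.card_eq_fintype_card, Fintype.card_subtype, hcnt_eq_filter (q := q)]
    have hmem : (0 : Fin (n + 1) → F) ∈
        (univ.filter fun v : Fin (n + 1) → F => ∑ i, v i ^ (q + 1) = 0) := by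
      have hz : (0 : F) ^ (q + 1) = 0 := zero_pow (Nat.succ_ne_zero q)
      simp [hz]
    rw [← Finset.card_erase_of_mem hmem]
    congr 1
    ext v
    simp only [Finset.mem_erase, Finset.mem_filter, Finset.mem_univ, true_and]
  have hmem0 : (0 : Fin (n + 1) → F) ∈
      (univ.filter fun v : Fin (n + 1) → F => ∑ i, v i ^ (q + 1) = 0) := by
    have hz : (0 : F) ^ (q + 1) = 0 := zero_pow (Nat.succ_ne_zero q)
    simp [hz]
  have hZpos : 1 ≤ hcnt q F (n + 1) 0 := by
    rw [hcnt_eq_filter (q := q)]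
    exact Finset.card_pos.2 ⟨0, hmem0⟩
  have hqq : 1 ≤ q ^ 2 := by nlinarith
  -- combine into an integer equation
  have hZ := hcnt_closed hpp hq hF (n + 1)
  have hSncard : (S.ncard : ℤ) * ((q : ℤ) ^ 2 - 1) = (hcnt q F (n + 1) 0 : ℤ) - 1 := by
    have h := hcard1.trans hcard2
    rw [Nat.card_coe_set_eq] at h
    zify [hqq, hZpos] at h
    linarith [h]
  have hq0 : (q : ℤ) ≠ 0 := by positivity
  have hD : ((q : ℤ) ^ 2 - 1) ≠ 0 := by
    have h2 : (2 : ℤ) ≤ (q : ℤ) := by exact_mod_cast hq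
    nlinarith
  have hs : ((-1 : ℤ) ^ n) * ((-1 : ℤ) ^ n) = 1 := by
    rw [← pow_add]
    exact Even.neg_one_pow ⟨n, rfl⟩
  have hNum : ((q : ℤ) ^ n - (-1) ^ n) * ((q : ℤ) ^ (n + 1) - (-1) ^ (n + 1))
      = ((q : ℤ) ^ 2 - 1) * (S.ncard : ℤ) := by
    apply mul_right_cancel₀ hq0
    linear_combination (-(q : ℤ)) * hSncard + (-1 : ℤ) * hZ + (-(q : ℤ)) * hs
  rw [hNum, Int.mul_ediv_cancel_left _ hD]
end

section
/- For a non-degenerate Hermitian curve, i.e., the curve $\mathcal{U}_2 = \{[x_0:x_1:x_2] \in \mathbb{P}^2(\mathbb{F}_{q^2}) : x_0^{q+1}+x_1^{q+1}+x_2^{q+1}=0\}$, the number of $\mathbb{F}_{q^2}$-rational points is $q^3+1$. -/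
open Finset

private lemma herm_frob {q : ℕ} (hpp : ∃ p k : ℕ, p.Prime ∧ 0 < k ∧ q = p ^ k)
    (F : Type) [Field F] [Fintype F] (hF : Fintype.card F = q ^ 2) :
    ∃ φ : F →+* F, ∀ x : F, φ x = x ^ q := by
  obtain ⟨p, k, hp, hk, rfl⟩ := hpp
  have hchar : CharP F (ringChar F) := ringChar.charP F
  obtain ⟨n, hrp, hcard⟩ := FiniteField.card F (ringChar F)
  have hpr : ringChar F = p := by
    have h1 : ringChar F ∣ p ^ (k * 2) := by
      rw [pow_mul, ← hF, hcard]
      exact dvd_pow_self _ (by positivity)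
    exact (Nat.prime_dvd_prime_iff_eq hrp hp).mp (hrp.dvd_of_dvd_pow h1)
  rw [hpr] at hchar
  haveI := hchar
  haveI := Fact.mk hp
  haveI : ExpChar F p := ExpChar.prime hp
  exact ⟨iterateFrobenius F p k, fun x => iterateFrobenius_def ..⟩

private lemma herm_fiber {q : ℕ} (hq : 2 ≤ q)
    (F : Type) [Field F] [Fintype F] [DecidableEq F] (hF : Fintype.card F = q ^ 2) :
    ∀ t : F, t ^ q = t →
      (univ.filter fun x : F => x ^ (q + 1) = t).card = if t = 0 then 1 else q + 1 := by
  classical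
  have hcardU : Fintype.card Fˣ = q ^ 2 - 1 := by rw [Fintype.card_units, hF]
  have hmul : (q + 1) * (q - 1) = q ^ 2 - 1 := by
    obtain ⟨r, rfl⟩ : ∃ r, q = r + 2 := ⟨q - 2, by omega⟩
    have h2 : (r + 2) ^ 2 = r ^ 2 + 4 * r + 4 := by ring
    have h3 : (r + 2 + 1) * (r + 2 - 1) = r ^ 2 + 4 * r + 3 := by
      have h4 : r + 2 - 1 = r + 1 := by omega
      rw [h4]; ring
    omega
  set ψ : Fˣ →* Fˣ := powMonoidHom (q + 1) with hψ
  set kfin := univ.filter (fun x : Fˣ => x ^ (q + 1) = 1) with hkfin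
  set rfin := univ.filter (fun x : Fˣ => x ^ (q - 1) = 1) with hrfin
  set imfin := univ.filter (fun x : Fˣ => x ∈ ψ.range) with himfin
  have hk : Nat.card ψ.ker = kfin.card := by
    rw [Nat.card_eq_fintype_card, Fintype.card_subtype]
    congr 1
    ext x
    simp [hkfin, MonoidHom.mem_ker, hψ, powMonoidHom_apply]
  have him : Nat.card ψ.range = imfin.card := by
    rw [Nat.card_eq_fintype_card, ← Fintype.card_coe imfin]
    exact Fintype.card_congr (Equiv.subtypeEquivRight (fun x => by simp [himfin]))
  have hkle : kfin.card ≤ q + 1 := by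
    simpa [hkfin] using IsCyclic.card_pow_eq_one_le (α := Fˣ) (n := q + 1) (by omega)
  have hrle : rfin.card ≤ q - 1 := by
    simpa [hrfin] using IsCyclic.card_pow_eq_one_le (α := Fˣ) (n := q - 1) (by omega)
  have hprod : kfin.card * imfin.card = (q + 1) * (q - 1) := by
    rw [← hk, ← him, hmul, ← Subgroup.index_ker ψ, Subgroup.card_mul_index,
      Nat.card_eq_fintype_card, hcardU]
  have hsub : imfin ⊆ rfin := by
    intro x hx
    simp only [himfin, mem_filter, mem_univ, true_and] at hx
    obtain ⟨c, hc⟩ := hx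
    simp only [hψ, powMonoidHom_apply] at hc
    simp only [hrfin, mem_filter, mem_univ, true_and]
    rw [← hc, ← pow_mul, hmul, ← hcardU, pow_card_eq_one]
  have himge : q - 1 ≤ imfin.card := by
    have h1 : (q + 1) * (q - 1) ≤ (q + 1) * imfin.card := by
      calc (q + 1) * (q - 1) = kfin.card * imfin.card := hprod.symm
        _ ≤ (q + 1) * imfin.card := Nat.mul_le_mul_right _ hkle
    exact Nat.le_of_mul_le_mul_left h1 (by omega)
  have hrim : imfin = rfin := eq_of_subset_of_card_le hsub (hrle.trans himge)
  have himcard : imfin.card = q - 1 := le_antisymm (hrim ▸ hrle) himge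
  have hkcard : kfin.card = q + 1 := by
    have h5 := hprod
    rw [himcard] at h5
    exact Nat.eq_of_mul_eq_mul_right (by omega) h5
  have hufib : ∀ u : Fˣ, u ^ (q - 1) = 1 →
      (univ.filter fun x : Fˣ => x ^ (q + 1) = u).card = q + 1 := by
    intro u hu
    have hur : u ∈ imfin := by rw [hrim]; simp [hrfin, hu]
    simp only [himfin, mem_filter, mem_univ, true_and] at hur
    obtain ⟨c, hc⟩ := hur
    simp only [hψ, powMonoidHom_apply] at hc
    have hbij : (univ.filter fun x : Fˣ => x ^ (q + 1) = u).card = kfin.card := by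
      apply Finset.card_bij (fun x _ => c⁻¹ * x)
      · intro a ha
        simp only [mem_filter, mem_univ, true_and] at ha
        simp only [hkfin, mem_filter, mem_univ, true_and]
        rw [mul_pow, inv_pow, hc, ha, inv_mul_cancel]
      · intro a _ b _ hab; exact mul_left_cancel hab
      · intro b hb
        simp only [hkfin, mem_filter, mem_univ, true_and] at hb
        refine ⟨c * b, ?_, by rw [inv_mul_cancel_left]⟩
        simp only [mem_filter, mem_univ, true_and]
        rw [mul_pow, hc, hb, mul_one]
    rw [hbij, hkcard]
  intro t ht
  by_cases h0 : t = 0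
  · subst h0
    rw [if_pos rfl]
    have hset : (univ.filter fun x : F => x ^ (q + 1) = 0) = {0} := by
      ext x
      simp [pow_eq_zero_iff (Nat.succ_ne_zero q)]
    rw [hset, card_singleton]
  · rw [if_neg h0]
    have htpow : t ^ (q - 1) = 1 := by
      have h1 : t ^ (q - 1) * t = 1 * t := by
        rw [← pow_succ, Nat.sub_add_cancel (by omega), ht, one_mul]
      exact mul_right_cancel₀ h0 h1
    set u : Fˣ := Units.mk0 t h0 with hu0
    have hu : u ^ (q - 1) = 1 := by
      ext
      simpa [hu0] using htpow
    have hbij2 : (univ.filter fun x : F => x ^ (q + 1) = t).card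
        = (univ.filter fun x : Fˣ => x ^ (q + 1) = u).card := by
      apply Eq.symm
      apply Finset.card_bij (fun (x : Fˣ) _ => (x : F))
      · intro a ha
        simp only [mem_filter, mem_univ, true_and] at ha ⊢
        calc (a : F) ^ (q + 1) = ((a ^ (q + 1) : Fˣ) : F) := by
              rw [Units.val_pow_eq_pow_val]
          _ = t := by rw [ha]; rfl
      · intro a _ b _ hab; exact Units.ext hab
      · intro b hb
        simp only [mem_filter, mem_univ, true_and] at hb
        have hb0 : b ≠ 0 := by
          rintro rfl
          exact h0 (by simpa using hb.symm)
        refine ⟨Units.mk0 b hb0, ?_, rfl⟩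
        simp only [mem_filter, mem_univ, true_and]
        ext
        simpa [hu0] using hb
    rw [hbij2, hufib u hu]

private lemma herm_arith {q T S S3 A B : ℕ} (hq : 2 ≤ q)
    (c1 : A = 1 + (q ^ 2 - 1) * (q + 1))
    (c2 : S3 = A + B * (q + 1))
    (c3 : A + B = q ^ 2 * q ^ 2)
    (c4 : S + 1 = S3)
    (c5 : S = T * (q ^ 2 - 1)) :
    T = q ^ 3 + 1 := by
  have h1 : (1 : ℕ) ≤ q ^ 2 := by nlinarith
  have hcast : ((q ^ 2 - 1 : ℕ) : ℤ) = (q : ℤ) ^ 2 - 1 := by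
    push_cast [Nat.cast_sub h1]; ring
  have z1 : (A : ℤ) = 1 + ((q : ℤ) ^ 2 - 1) * ((q : ℤ) + 1) := by
    rw [← hcast]; exact_mod_cast c1
  have z2 : (S3 : ℤ) = (A : ℤ) + (B : ℤ) * ((q : ℤ) + 1) := by exact_mod_cast c2
  have z3 : (A : ℤ) + (B : ℤ) = (q : ℤ) ^ 2 * (q : ℤ) ^ 2 := by exact_mod_cast c3
  have z4 : (S : ℤ) + 1 = (S3 : ℤ) := by exact_mod_cast c4
  have z5 : (S : ℤ) = (T : ℤ) * ((q : ℤ) ^ 2 - 1) := by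
    rw [← hcast]; exact_mod_cast c5
  have key : (T : ℤ) * ((q : ℤ) ^ 2 - 1) = ((q : ℤ) ^ 3 + 1) * ((q : ℤ) ^ 2 - 1) := by
    linear_combination -z5 + z4 + z2 + ((q : ℤ) + 1) * z3 - (q : ℤ) * z1
  have hne : ((q : ℤ) ^ 2 - 1) ≠ 0 := by
    have : (2 : ℤ) ≤ (q : ℤ) := by exact_mod_cast hq
    nlinarith
  have := mul_right_cancel₀ hne key
  exact_mod_cast this

theorem stmt_18 (q : ℕ) (hpp : ∃ p k : ℕ, p.Prime ∧ 0 < k ∧ q = p ^ k)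
    (F : Type) [Field F] [Fintype F] (hF : Fintype.card F = q ^ 2) :
    {x : Projectivization F (Fin 3 → F) |
        ∑ i, (x.rep i) ^ (q + 1) = 0}.ncard = q ^ 3 + 1 := by
  classical
  obtain ⟨φ, hφ⟩ := herm_frob hpp F hF
  have hq2 : 2 ≤ q := by
    obtain ⟨p, k, hp, hk, rfl⟩ := hpp
    calc 2 ≤ p := hp.two_le
      _ ≤ p ^ k := Nat.le_self_pow hk.ne' p
  have hfib := herm_fiber hq2 F hF
  have hpowcard : ∀ x : F, x ^ (q ^ 2) = x := fun x => by rw [← hF, FiniteField.pow_card]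
  have hNK : ∀ x : F, (x ^ (q + 1)) ^ q = x ^ (q + 1) := by
    intro x
    rw [← pow_mul]
    have h : (q + 1) * q = q ^ 2 + q := by ring
    rw [h, pow_add, hpowcard]
    exact (pow_succ' x q).symm
  have hKadd : ∀ a b : F, a ^ q = a → b ^ q = b → (a + b) ^ q = a + b := by
    intro a b ha hb; rw [← hφ, map_add, hφ, hφ, ha, hb]
  have hKneg : ∀ a : F, a ^ q = a → (-a) ^ q = -a := by
    intro a ha; rw [← hφ, map_neg, hφ, ha]
  -- the pair count
  set A := univ.filter (fun v : F × F => v.1 ^ (q + 1) + v.2 ^ (q + 1) = 0) with hA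
  have hcardA : A.card = 1 + (q ^ 2 - 1) * (q + 1) := by
    rw [card_eq_sum_card_fiberwise (f := Prod.snd) (t := univ) (fun x _ => mem_univ _)]
    have hfibb : ∀ b : F, (A.filter fun v => v.snd = b).card = if b = 0 then 1 else q + 1 := by
      intro b
      have hbij : (A.filter fun v => v.snd = b).card
          = (univ.filter fun a : F => a ^ (q + 1) = -(b ^ (q + 1))).card := by
        apply Finset.card_bij (fun v _ => v.fst)
        · intro v hv
          simp only [hA, mem_filter, mem_univ, true_and] at hv
          obtain ⟨h1, h2⟩ := hv
          simp only [mem_filter, mem_univ, true_and]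
          rw [← h2]
          exact eq_neg_of_add_eq_zero_left h1
        · intro v hv w hw hvw
          simp only [hA, mem_filter, mem_univ, true_and] at hv hw
          exact Prod.ext hvw (hv.2.trans hw.2.symm)
        · intro a ha
          simp only [mem_filter, mem_univ, true_and] at ha
          refine ⟨(a, b), ?_, rfl⟩
          simp only [hA, mem_filter, mem_univ, true_and]
          exact ⟨by rw [ha]; exact neg_add_cancel _, trivial⟩
      rw [hbij, hfib _ (hKneg _ (hNK b))]
      simp [neg_eq_zero, pow_eq_zero_iff (Nat.succ_ne_zero q)]
    rw [sum_congr rfl (fun b _ => hfibb b)]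
    rw [← Finset.sum_filter_add_sum_filter_not univ (fun b : F => b = 0)]
    have h01 : univ.filter (fun b : F => b = 0) = {0} := by ext x; simp
    have hterm1 : ∑ b ∈ univ.filter (fun b : F => b = 0),
        (if b = 0 then 1 else q + 1) = 1 := by
      rw [h01, Finset.sum_singleton, if_pos rfl]
    have hterm2 : ∑ b ∈ univ.filter (fun b : F => ¬ b = 0),
        (if b = 0 then 1 else q + 1) = (q ^ 2 - 1) * (q + 1) := by
      rw [Finset.sum_congr rfl (fun b hb => if_neg (mem_filter.mp hb).2), Finset.sum_const,
        smul_eq_mul]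
      congr 1
      rw [Finset.filter_not, h01, Finset.card_sdiff_of_subset (by intro x hx; simp), Finset.card_univ, hF,
        Finset.card_singleton]
    rw [hterm1, hterm2]
  -- the triple count
  set S3 := univ.filter (fun w : Fin 3 → F => ∑ i, w i ^ (q + 1) = 0) with hS3
  set B := univ.filter (fun v : F × F => ¬ (v.1 ^ (q + 1) + v.2 ^ (q + 1) = 0)) with hB
  have hcardS3 : S3.card = A.card + B.card * (q + 1) := by
    rw [card_eq_sum_card_fiberwise (f := fun w : Fin 3 → F => (w 0, w 1)) (t := univ)
      (fun x _ => mem_univ _)]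
    have hfibv : ∀ v : F × F, (S3.filter fun w => (w 0, w 1) = v).card
        = if v.1 ^ (q + 1) + v.2 ^ (q + 1) = 0 then 1 else q + 1 := by
      intro v
      have hbij : (S3.filter fun w => (w 0, w 1) = v).card
          = (univ.filter fun c : F =>
              c ^ (q + 1) = -(v.1 ^ (q + 1) + v.2 ^ (q + 1))).card := by
        apply Finset.card_bij (fun w _ => w 2)
        · intro w hw
          simp only [hS3, mem_filter, mem_univ, true_and, Fin.sum_univ_three] at hw
          obtain ⟨h1, h2⟩ := hw
          obtain ⟨ha, hb⟩ := Prod.ext_iff.mp h2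
          simp only [mem_filter, mem_univ, true_and]
          rw [← ha, ← hb]
          exact eq_neg_of_add_eq_zero_right h1
        · intro w hw w' hw' hww
          simp only [hS3, mem_filter, mem_univ, true_and] at hw hw'
          obtain ⟨ha, hb⟩ := Prod.ext_iff.mp hw.2
          obtain ⟨ha', hb'⟩ := Prod.ext_iff.mp hw'.2
          funext i
          fin_cases i
          · exact ha.trans ha'.symm
          · exact hb.trans hb'.symm
          · exact hww
        · intro c hc
          simp only [mem_filter, mem_univ, true_and] at hc
          refine ⟨![v.1, v.2, c], ?_, rfl⟩
          simp only [hS3, mem_filter, mem_univ, true_and, Fin.sum_univ_three]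
          refine ⟨?_, rfl⟩
          simp only [Matrix.cons_val_zero, Matrix.cons_val_one, Matrix.head_cons,
            Matrix.cons_val_two, Matrix.tail_cons]
          rw [hc]
          exact add_neg_cancel _
      rw [hbij, hfib _ (hKneg _ (hKadd _ _ (hNK _) (hNK _)))]
      simp only [neg_eq_zero]
    rw [sum_congr rfl (fun v _ => hfibv v)]
    rw [Finset.sum_ite, Finset.sum_const, Finset.sum_const, smul_eq_mul, smul_eq_mul, mul_one]
  have hABc : A.card + B.card = q ^ 2 * q ^ 2 := by
    rw [hA, hB]
    rw [Finset.card_filter_add_card_filter_not]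
    rw [Finset.card_univ, Fintype.card_prod, hF]
  -- remove zero
  have h0S3 : (0 : Fin 3 → F) ∈ S3 := by
    simp only [hS3, mem_filter, mem_univ, true_and]
    simp [zero_pow (Nat.succ_ne_zero q)]
  set S := S3.erase 0 with hSdef
  have hScard : S.card + 1 = S3.card := by
    rw [hSdef, card_erase_of_mem h0S3]
    have : 1 ≤ S3.card := Finset.card_pos.mpr ⟨0, h0S3⟩
    omega
  -- projectivization
  haveI : Finite (Projectivization F (Fin 3 → F)) := Quotient.finite _
  haveI : Fintype (Projectivization F (Fin 3 → F)) := Fintype.ofFinite _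
  set T := univ.filter
    (fun x : Projectivization F (Fin 3 → F) => ∑ i, (x.rep i) ^ (q + 1) = 0) with hT
  have hone : (fun _ : Fin 3 => (1 : F)) ≠ 0 := by
    intro h; simpa using congrFun h 0
  set g : (Fin 3 → F) → Projectivization F (Fin 3 → F) :=
    fun v => if h : v ≠ 0 then Projectivization.mk F v h
      else Projectivization.mk F (fun _ => (1 : F)) hone with hg
  have hwell : ∀ (v : Fin 3 → F) (hv : v ≠ 0),
      ((∑ i, ((Projectivization.mk F v hv).rep i) ^ (q + 1) = 0) ↔ ∑ i, v i ^ (q + 1) = 0) := by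
    intro v hv
    have h1 : Projectivization.mk F ((Projectivization.mk F v hv).rep)
        (Projectivization.rep_nonzero _) = Projectivization.mk F v hv :=
      Projectivization.mk_rep _
    rw [Projectivization.mk_eq_mk_iff] at h1
    obtain ⟨c, hc⟩ := h1
    have h2 : ∑ i, ((Projectivization.mk F v hv).rep i) ^ (q + 1)
        = (c : F) ^ (q + 1) * ∑ i, v i ^ (q + 1) := by
      rw [← hc]
      simp only [Units.smul_def, Pi.smul_apply, smul_eq_mul, mul_pow]
      rw [Finset.mul_sum]
    rw [h2, mul_eq_zero]
    have hc0 : (c : F) ^ (q + 1) ≠ 0 := pow_ne_zero _ (Units.ne_zero c)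
    simp [hc0]
  have hmem : ∀ v ∈ S, g v ∈ T := by
    intro v hv
    have hvne : v ≠ 0 := Finset.ne_of_mem_erase hv
    have hvS3 : v ∈ S3 := Finset.mem_of_mem_erase hv
    simp only [hS3, mem_filter, mem_univ, true_and] at hvS3
    simp only [hT, mem_filter, mem_univ, true_and, hg, dif_pos hvne]
    exact (hwell v hvne).mpr hvS3
  have hfiber : ∀ x ∈ T, (S.filter fun v => g v = x).card = q ^ 2 - 1 := by
    intro x hx
    simp only [hT, mem_filter, mem_univ, true_and] at hx
    have hbij : (univ : Finset Fˣ).card = (S.filter fun v => g v = x).card := by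
      apply Finset.card_bij (fun (c : Fˣ) _ => (c : F) • x.rep)
      · intro c _
        have hne : (c : F) • x.rep ≠ 0 :=
          smul_ne_zero (Units.ne_zero c) (Projectivization.rep_nonzero x)
        simp only [mem_filter]
        refine ⟨Finset.mem_erase.mpr ⟨hne, ?_⟩, ?_⟩
        · simp only [hS3, mem_filter, mem_univ, true_and]
          have : ∑ i, ((c : F) • x.rep) i ^ (q + 1)
              = (c : F) ^ (q + 1) * ∑ i, (x.rep i) ^ (q + 1) := by
            simp only [Pi.smul_apply, smul_eq_mul, mul_pow]
            rw [Finset.mul_sum]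
          rw [this, hx, mul_zero]
        · simp only [hg, dif_pos hne]
          have : Projectivization.mk F ((c : F) • x.rep) hne
              = Projectivization.mk F x.rep (Projectivization.rep_nonzero x) := by
            rw [Projectivization.mk_eq_mk_iff]
            exact ⟨c, by rw [Units.smul_def]⟩
          rw [this, Projectivization.mk_rep]
      · intro c _ c' _ hcc
        obtain ⟨i, hi⟩ := Function.ne_iff.mp (Projectivization.rep_nonzero x)
        have := congrFun hcc i
        simp only [Pi.smul_apply, smul_eq_mul] at this
        exact Units.ext (mul_right_cancel₀ hi this)
      · intro v hv
        simp only [mem_filter] at hv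
        obtain ⟨hvS, hgv⟩ := hv
        have hvne : v ≠ 0 := Finset.ne_of_mem_erase hvS
        rw [hg] at hgv
        simp only [dif_pos hvne] at hgv
        rw [← Projectivization.mk_rep x, Projectivization.mk_eq_mk_iff] at hgv
        obtain ⟨c, hc⟩ := hgv
        exact ⟨c, mem_univ _, by rw [← Units.smul_def, hc]⟩
    rw [← hbij, Finset.card_univ, Fintype.card_units, hF]
  have hcount : S.card = T.card * (q ^ 2 - 1) := by
    rw [card_eq_sum_card_fiberwise hmem, sum_congr rfl hfiber, sum_const, smul_eq_mul]
  have hsetT : {x : Projectivization F (Fin 3 → F) | ∑ i, (x.rep i) ^ (q + 1) = 0} = ↑T := by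
    ext x
    simp [hT]
  rw [hsetT, Set.ncard_coe_finset]
  exact herm_arith hq2 hcardA hcardS3 hABc hScard hcount
end
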